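/- The Cauchy–Schwarz divergence between two univariate Gaussians has the closed form D_CS(φ(·|μ₁,σ₁²), φ(·|μ₂,σ₂²)) = -log φ(μ₁ | μ₂, σ₁² + σ₂²) - (1/4)·log(4πσ₁² · 4πσ₂²), where D_CS(p,q) = -log( ∫ p q / sqrt(∫ p² · ∫ q²) ). -/

import Mathlib

open MeasureTheory

/-- The univariate Gaussian density with mean `m` and variance `v`. -/
noncomputable def gpdf (m v x : ℝ) : ℝ :=
  (Real.sqrt (2 * Real.pi * v))⁻¹ * Real.exp (-(x - m) ^ 2 / (2 * v))

lemma gpdf_pos (m : ℝ) {v : ℝ} (hv : 0 < v) (x : ℝ) : 0 < gpdf m v x := by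
  unfold gpdf
  have : (0:ℝ) < Real.pi := Real.pi_pos
  positivity

lemma integral_gpdf (m : ℝ) {v : ℝ} (hv : 0 < v) : ∫ x : ℝ, gpdf m v x = 1 := by
  have h := ProbabilityTheory.integral_gaussianPDFReal_eq_one m
    (v := v.toNNReal) (by rw [Ne, Real.toNNReal_eq_zero]; exact not_le.mpr hv)
  simpa [ProbabilityTheory.gaussianPDFReal, gpdf, Real.coe_toNNReal _ hv.le] using h

lemma gpdf_mul (μ₁ μ₂ : ℝ) {v₁ v₂ : ℝ} (hv₁ : 0 < v₁) (hv₂ : 0 < v₂) (x : ℝ) :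
    gpdf μ₁ v₁ x * gpdf μ₂ v₂ x
      = gpdf μ₂ (v₁ + v₂) μ₁
        * gpdf ((v₂ * μ₁ + v₁ * μ₂) / (v₁ + v₂)) (v₁ * v₂ / (v₁ + v₂)) x := by
  have hs : 0 < v₁ + v₂ := by linarith
  have hpi : (0:ℝ) < Real.pi := Real.pi_pos
  unfold gpdf
  rw [show ∀ a b c d : ℝ, a⁻¹ * Real.exp c * (b⁻¹ * Real.exp d)
      = (a * b)⁻¹ * Real.exp (c + d) by intros; rw [Real.exp_add, mul_inv]; ring,
    show ∀ a b c d : ℝ, a⁻¹ * Real.exp c * (b⁻¹ * Real.exp d)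
      = (a * b)⁻¹ * Real.exp (c + d) by intros; rw [Real.exp_add, mul_inv]; ring,
    ← Real.sqrt_mul (by positivity), ← Real.sqrt_mul (by positivity)]
  congr 2
  · field_simp
  · field_simp
    ring

lemma integral_gpdf_mul (μ₁ μ₂ : ℝ) {v₁ v₂ : ℝ} (hv₁ : 0 < v₁) (hv₂ : 0 < v₂) :
    ∫ x : ℝ, gpdf μ₁ v₁ x * gpdf μ₂ v₂ x = gpdf μ₂ (v₁ + v₂) μ₁ := by
  have hv : 0 < v₁ * v₂ / (v₁ + v₂) := by positivity
  calc ∫ x : ℝ, gpdf μ₁ v₁ x * gpdf μ₂ v₂ x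
      = ∫ x : ℝ, gpdf μ₂ (v₁ + v₂) μ₁
          * gpdf ((v₂ * μ₁ + v₁ * μ₂) / (v₁ + v₂)) (v₁ * v₂ / (v₁ + v₂)) x := by
        simp_rw [gpdf_mul μ₁ μ₂ hv₁ hv₂]
    _ = gpdf μ₂ (v₁ + v₂) μ₁ := by
        rw [MeasureTheory.integral_const_mul, integral_gpdf _ hv, mul_one]

lemma integral_gpdf_sq (m : ℝ) {v : ℝ} (hv : 0 < v) :
    ∫ x : ℝ, (gpdf m v x) ^ 2 = (Real.sqrt (4 * Real.pi * v))⁻¹ := by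
  have h := integral_gpdf_mul m m hv hv
  simp_rw [← sq] at h
  rw [h]
  unfold gpdf
  rw [show m - m = 0 by ring]
  norm_num
  ring_nf

theorem stmt_10 (μ₁ μ₂ v₁ v₂ : ℝ) (hv₁ : 0 < v₁) (hv₂ : 0 < v₂) :
    -Real.log ((∫ x : ℝ, gpdf μ₁ v₁ x * gpdf μ₂ v₂ x)
        / Real.sqrt ((∫ x : ℝ, (gpdf μ₁ v₁ x) ^ 2) * ∫ x : ℝ, (gpdf μ₂ v₂ x) ^ 2))
      = -Real.log (gpdf μ₂ (v₁ + v₂) μ₁)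
        - (1 / 4) * Real.log ((4 * Real.pi * v₁) * (4 * Real.pi * v₂)) := by
  have hpi : (0:ℝ) < Real.pi := Real.pi_pos
  have ha : (0:ℝ) < 4 * Real.pi * v₁ := by positivity
  have hb : (0:ℝ) < 4 * Real.pi * v₂ := by positivity
  have hG : 0 < gpdf μ₂ (v₁ + v₂) μ₁ := gpdf_pos _ (by linarith) _
  rw [integral_gpdf_mul μ₁ μ₂ hv₁ hv₂, integral_gpdf_sq _ hv₁, integral_gpdf_sq _ hv₂,
    Real.log_div hG.ne' (by positivity),
    Real.log_sqrt (by positivity), Real.log_mul (by positivity) (by positivity),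
    Real.log_inv, Real.log_inv, Real.log_sqrt ha.le, Real.log_sqrt hb.le,
    Real.log_mul ha.ne' hb.ne']
  ring
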